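/- arXiv:1403.2397 — 2 statements merged into one kernel-verified Lean document; each statement's English description precedes it below -/
import Mathlib

section
/- Every probability measure π on the model space {0,1}^p is the marginal distribution of the final model γ_(p) of some probabilistic forward-stepwise procedure; that is, there exist maps ρ and λ (satisfying the pFS constraints) such that for all γ ∈ {0,1}^p, P(γ_(p) = γ) = π(γ). -/
open Finset

attribute [local instance] Classical.propDecidable

noncomputable section

/-- A model is an inclusion-indicator vector in `{0,1}^p`. -/
abbrev Model (p : ℕ) := Fin p → Bool

/-- Model size `|γ|`: the number of included variables. -/
def msize {p : ℕ} (γ : Model p) : ℕ := (Finset.univ.filter (fun j => γ j = true)).card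

/-- `γ^{+j}` : the model `γ` with variable `j` added. -/
def mplus {p : ℕ} (γ : Model p) (j : Fin p) : Model p := Function.update γ j true

/-- The null model. -/
def mnull (p : ℕ) : Model p := fun _ => false

/-- A sequence of decision variables `(S_t, J_t)`, `t = 1, …, p`. -/
abbrev Dec (p : ℕ) := Fin p → Bool × Fin p

/-- The tentative model `γ_(t)` determined by the decisions `d`. -/
def tent {p : ℕ} (d : Dec p) : ℕ → Model p
  | 0 => mnull p
  | t + 1 =>
    if h : t < p then
      if (d ⟨t, h⟩).1 = true then tent d t
      else mplus (tent d t) (d ⟨t, h⟩).2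
    else tent d t

/-- The procedure has stopped strictly before step `t+1`, i.e. some `S_s = 1` with `s ≤ t`. -/
def stopB {p : ℕ} (d : Dec p) (t : ℕ) : Prop :=
  ∃ s : Fin p, (s : ℕ) < t ∧ (d s).1 = true

/-- Probability of the `t`-th pair of decisions of a pFS procedure with stopping map `ρ`
and selection map `lam` (once stopped, the stopping indicator stays 1 with probability 1;
the selection variable is always drawn from the multinomial with weights `lam`). -/
def stepProb {p : ℕ} (ρ : Model p → ℝ) (lam : Model p → Fin p → ℝ)
    (d : Dec p) (t : Fin p) : ℝ :=
  (if stopB d (t : ℕ) then (if (d t).1 = true then 1 else 0)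
   else if (d t).1 = true then ρ (tent d (t : ℕ)) else 1 - ρ (tent d (t : ℕ)))
  * lam (tent d (t : ℕ)) (d t).2

/-- Probability of a whole decision sequence under the pFS procedure `(ρ, lam)`. -/
def pathProb {p : ℕ} (ρ : Model p → ℝ) (lam : Model p → Fin p → ℝ) (d : Dec p) : ℝ :=
  ∏ t : Fin p, stepProb ρ lam d t

/-- Marginal probability that the final model `γ_(p)` equals `γ`. -/
def finalProb {p : ℕ} (ρ : Model p → ℝ) (lam : Model p → Fin p → ℝ) (γ : Model p) : ℝ :=
  ∑ d : Dec p, if tent d p = γ then pathProb ρ lam d else 0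

/-- Marginal probability that the final model has size `s`. -/
def sizeProb {p : ℕ} (ρ : Model p → ℝ) (lam : Model p → Fin p → ℝ) (s : ℕ) : ℝ :=
  ∑ d : Dec p, if msize (tent d p) = s then pathProb ρ lam d else 0

/-- Validity of a stopping-probability map: values in `[0,1]` on non-full models. -/
def ValidStop {p : ℕ} (ρ : Model p → ℝ) : Prop :=
  ∀ γ : Model p, msize γ < p → 0 ≤ ρ γ ∧ ρ γ ≤ 1

/-- Validity of a selection-probability map: nonnegative, summing to one, and vanishing on
already-included variables, on non-full models. -/
def ValidSel {p : ℕ} (lam : Model p → Fin p → ℝ) : Prop :=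
  ∀ γ : Model p, msize γ < p →
    (∀ j, 0 ≤ lam γ j) ∧ (∑ j, lam γ j) = 1 ∧ (∀ j, γ j = true → lam γ j = 0)

/-- `(ρ, lam)` specify a valid pFS procedure. -/
def IsPFS {p : ℕ} (ρ : Model p → ℝ) (lam : Model p → Fin p → ℝ) : Prop :=
  ValidStop ρ ∧ ValidSel lam

/-- The Markov transition kernel of the pFS chain at step `t` (from `γ_(t-1)` to `γ_(t)`). -/
def kernel {p : ℕ} (ρ : Model p → ℝ) (lam : Model p → Fin p → ℝ)
    (t : ℕ) (γ γ' : Model p) : ℝ :=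
  if msize γ < t - 1 then (if γ' = γ then 1 else 0)
  else if msize γ = t - 1 then
    (if γ' = γ then ρ γ
     else ∑ j ∈ Finset.univ.filter (fun j => γ j = false ∧ γ' = mplus γ j), (1 - ρ γ) * lam γ j)
  else 0

section Aux
variable {p : ℕ}

lemma msize_le (γ : Model p) : msize γ ≤ p := by
  classical
  simpa [msize] using (Finset.card_filter_le Finset.univ (fun j => γ j = true))

lemma card_false (γ : Model p) :
    (Finset.univ.filter (fun j => γ j = false)).card = p - msize γ := by
  classical
  have h := Finset.card_filter_add_card_filter_not
    (s := (Finset.univ : Finset (Fin p))) (fun j => γ j = true)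
  have h2 : (Finset.univ.filter (fun j => ¬ γ j = true)) =
      (Finset.univ.filter (fun j => γ j = false)) := by
    apply Finset.filter_congr; intro j _; simp
  rw [h2] at h
  simp only [Finset.card_univ, Fintype.card_fin] at h
  have hm : (Finset.univ.filter (fun j => γ j = true)).card = msize γ := rfl
  omega

lemma mplus_apply_self (γ : Model p) (j : Fin p) : mplus γ j j = true := by
  simp [mplus]

lemma mplus_apply_ne (γ : Model p) {i j : Fin p} (h : i ≠ j) : mplus γ j i = γ i := by
  simp [mplus, Function.update_apply, h]

lemma mplus_of_true {γ : Model p} {j : Fin p} (h : γ j = true) : mplus γ j = γ := by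
  funext i
  by_cases hi : i = j
  · subst hi; simp [mplus, h]
  · simp [mplus_apply_ne _ hi]

lemma msize_mplus {γ : Model p} {j : Fin p} (h : γ j = false) :
    msize (mplus γ j) = msize γ + 1 := by
  classical
  have hset : (Finset.univ.filter (fun i => mplus γ j i = true))
      = insert j (Finset.univ.filter (fun i => γ i = true)) := by
    ext i
    by_cases hi : i = j
    · subst hi; simp [mplus_apply_self]
    · simp [mplus_apply_ne _ hi, hi]
  have hj : j ∉ (Finset.univ.filter (fun i => γ i = true)) := by simp [h]
  rw [msize, hset, Finset.card_insert_of_notMem hj, msize]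

lemma msize_eq_zero {γ : Model p} : msize γ = 0 ↔ γ = mnull p := by
  constructor
  · intro h
    funext i
    have : (Finset.univ.filter (fun j => γ j = true)) = ∅ := Finset.card_eq_zero.mp h
    have hi : i ∉ (Finset.univ.filter (fun j => γ j = true)) := by simp [this]
    simp only [Finset.mem_filter, Finset.mem_univ, true_and] at hi
    simp [mnull, Bool.eq_false_iff.mpr hi]
  · intro h; subst h
    simp [msize, mnull]

lemma msize_full {γ : Model p} (h : msize γ = p) : ∀ j, γ j = true := by
  intro j
  have : (Finset.univ.filter (fun j => γ j = true)) = Finset.univ := by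
    apply Finset.eq_univ_of_card
    simpa [Fintype.card_fin, msize] using h
  have := Finset.mem_filter.mp (this ▸ Finset.mem_univ j)
  exact this.2

/-- coefficient `t! (k-t)! / k!` -/
def coefW (t k : ℕ) : ℝ := (t.factorial : ℝ) * ((k - t).factorial : ℝ) / (k.factorial : ℝ)

lemma coefW_nonneg (t k : ℕ) : 0 ≤ coefW t k := by
  unfold coefW
  positivity

lemma coefW_self (t : ℕ) : coefW t t = 1 := by
  unfold coefW
  rw [Nat.sub_self]
  simp [Nat.factorial]
  exact Nat.factorial_ne_zero t

lemma coefW_succ (t k : ℕ) (h : t < k) :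
    ((k - t : ℕ) : ℝ) * coefW (t + 1) k = ((t + 1 : ℕ) : ℝ) * coefW t k := by
  unfold coefW
  rw [mul_div_assoc', mul_div_assoc']
  congr 1
  have h1 : (k - t) * ((t+1).factorial * (k - (t+1)).factorial)
      = (t+1) * (t.factorial * (k - t).factorial) := by
    have hkt : 0 < k - t := by omega
    have : k - (t+1) = (k - t) - 1 := by omega
    rw [this, Nat.factorial_succ]
    have h2 : (k - t) * ((k - t) - 1).factorial = (k - t).factorial :=
      Nat.mul_factorial_pred hkt.ne'
    calc (k-t) * ((t+1) * t.factorial * ((k-t)-1).factorial)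
        = (t+1) * t.factorial * ((k-t) * ((k-t)-1).factorial) := by ring
      _ = (t+1) * t.factorial * (k-t).factorial := by rw [h2]
      _ = (t+1) * (t.factorial * (k-t).factorial) := by ring
  exact_mod_cast congrArg (Nat.cast (R := ℝ)) h1

/-- `γ ≤ γ'` as models -/
def mle (γ γ' : Model p) : Prop := ∀ j, γ j = true → γ' j = true

/-- Total chain mass through a model. -/
def Wf (π : Model p → ℝ) (γ : Model p) : ℝ :=
  ∑ γ' : Model p, if mle γ γ' then π γ' * coefW (msize γ) (msize γ') else 0

end Aux
section WLem
variable {p : ℕ} {π : Model p → ℝ}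

lemma mle_refl (γ : Model p) : mle γ γ := fun _ h => h

lemma Wf_nonneg (hnn : ∀ γ, 0 ≤ π γ) (γ : Model p) : 0 ≤ Wf π γ := by
  apply Finset.sum_nonneg
  intro γ' _
  by_cases h : mle γ γ'
  · simp only [if_pos h]
    exact mul_nonneg (hnn γ') (coefW_nonneg _ _)
  · simp [h]

lemma Wf_ge_pi (hnn : ∀ γ, 0 ≤ π γ) (γ : Model p) : π γ ≤ Wf π γ := by
  have h1 : π γ = (if mle γ γ then π γ * coefW (msize γ) (msize γ) else 0) := by
    rw [if_pos (mle_refl _), coefW_self, mul_one]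
  rw [h1]
  apply Finset.single_le_sum (f := fun γ' =>
    if mle γ γ' then π γ' * coefW (msize γ) (msize γ') else 0)
  · intro γ' _
    by_cases h : mle γ γ'
    · simp only [if_pos h]; exact mul_nonneg (hnn γ') (coefW_nonneg _ _)
    · simp [h]
  · exact Finset.mem_univ γ

lemma Wf_null (hsum : ∑ γ : Model p, π γ = 1) : Wf π (mnull p) = 1 := by
  rw [Wf, ← hsum]
  apply Finset.sum_congr rfl
  intro γ' _
  rw [if_pos (by intro j h; simp [mnull] at h)]
  have : msize (mnull p) = 0 := msize_eq_zero.mpr rfl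
  rw [this]
  unfold coefW
  rw [Nat.factorial_zero, Nat.sub_zero]
  norm_num
  rw [div_self (by exact_mod_cast Nat.factorial_ne_zero (msize γ'))]
  ring

lemma Wf_full {γ : Model p} (h : msize γ = p) : Wf π γ = π γ := by
  have hfull := msize_full h
  have : Wf π γ = ∑ γ' : Model p, if γ' = γ then π γ' else 0 := by
    apply Finset.sum_congr rfl
    intro γ' _
    by_cases he : γ' = γ
    · subst he
      rw [if_pos (mle_refl _), if_pos rfl, coefW_self, mul_one]
    · rw [if_neg, if_neg he]
      intro hle
      apply he
      funext j
      have h1 := hle j (hfull j)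
      rw [h1, hfull j]
  rw [this, Finset.sum_ite_eq' Finset.univ γ π, if_pos (Finset.mem_univ γ)]

lemma mle_mplus_iff {γ γ' : Model p} {j : Fin p} :
    mle (mplus γ j) γ' ↔ (γ' j = true ∧ mle γ γ') := by
  constructor
  · intro h
    refine ⟨h j (mplus_apply_self γ j), fun i hi => ?_⟩
    by_cases hij : i = j
    · subst hij; exact h i (mplus_apply_self γ i)
    · exact h i (by rw [mplus_apply_ne _ hij]; exact hi)
  · rintro ⟨h1, h2⟩ i hi
    by_cases hij : i = j
    · subst hij; exact h1
    · exact h2 i (by rwa [mplus_apply_ne _ hij] at hi)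

lemma card_diff_of_mle {γ γ' : Model p} (h : mle γ γ') :
    (Finset.univ.filter (fun j => γ j = false ∧ γ' j = true)).card = msize γ' - msize γ := by
  classical
  have hsub : (Finset.univ.filter (fun j => γ j = true))
      ⊆ (Finset.univ.filter (fun j => γ' j = true)) := by
    intro j hj
    simp only [Finset.mem_filter, Finset.mem_univ, true_and] at hj ⊢
    exact h j hj
  have hset : (Finset.univ.filter (fun j => γ j = false ∧ γ' j = true))
      = (Finset.univ.filter (fun j => γ' j = true)) \ (Finset.univ.filter (fun j => γ j = true)) := by
    ext i
    simp only [Finset.mem_filter, Finset.mem_univ, true_and, Finset.mem_sdiff]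
    constructor
    · rintro ⟨h1, h2⟩; exact ⟨h2, by simp [h1]⟩
    · rintro ⟨h1, h2⟩; exact ⟨by simpa using h2, h1⟩
  rw [hset, Finset.card_sdiff_of_subset hsub]
  rfl

lemma mle_strict_size {γ γ' : Model p} (h : mle γ γ') (hne : γ' ≠ γ) :
    msize γ < msize γ' := by
  classical
  have hsub : (Finset.univ.filter (fun j => γ j = true))
      ⊂ (Finset.univ.filter (fun j => γ' j = true)) := by
    rw [Finset.ssubset_iff_subset_ne]
    constructor
    · intro j hj
      simp only [Finset.mem_filter, Finset.mem_univ, true_and] at hj ⊢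
      exact h j hj
    · intro heq
      apply hne
      funext j
      have : (j ∈ Finset.univ.filter (fun i => γ i = true)) ↔
          (j ∈ Finset.univ.filter (fun i => γ' i = true)) := by rw [heq]
      simp only [Finset.mem_filter, Finset.mem_univ, true_and] at this
      cases hj : γ j
      · cases hj' : γ' j
        · rfl
        · exact absurd (this.mpr hj') (by simp [hj])
      · rw [this.mp hj]
  exact Finset.card_lt_card hsub

/-- Key recurrence: `∑_{j : γ_j = 0} W(γ+j) = (|γ|+1)(W(γ) - π(γ))`. -/
lemma Wf_rec (γ : Model p) :
    (∑ j : Fin p, if γ j = false then Wf π (mplus γ j) else 0)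
      = ((msize γ + 1 : ℕ) : ℝ) * (Wf π γ - π γ) := by
  classical
  set t := msize γ with ht
  have lhs_eq : (∑ j : Fin p, if γ j = false then Wf π (mplus γ j) else 0)
      = ∑ γ' : Model p, ∑ j : Fin p,
          if γ j = false ∧ mle (mplus γ j) γ' then π γ' * coefW (t+1) (msize γ') else 0 := by
    rw [Finset.sum_comm]
    apply Finset.sum_congr rfl
    intro j _
    by_cases hj : γ j = false
    · rw [if_pos hj, Wf]
      apply Finset.sum_congr rfl
      intro γ' _
      rw [msize_mplus hj, ← ht]
      by_cases hle : mle (mplus γ j) γ'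
      · rw [if_pos hle, if_pos ⟨hj, hle⟩]
      · rw [if_neg hle, if_neg (by tauto)]
    · rw [if_neg hj]
      rw [eq_comm]
      apply Finset.sum_eq_zero
      intro γ' _
      rw [if_neg (by tauto)]
  rw [lhs_eq]
  have rhs_eq : ((t + 1 : ℕ) : ℝ) * (Wf π γ - π γ)
      = ∑ γ' : Model p, ((t+1 : ℕ) : ℝ) *
          ((if mle γ γ' then π γ' * coefW t (msize γ') else 0) - (if γ' = γ then π γ else 0)) := by
    rw [← Finset.mul_sum, Finset.sum_sub_distrib, Finset.sum_ite_eq' Finset.univ γ,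
      if_pos (Finset.mem_univ γ)]
    rfl
  rw [rhs_eq]
  apply Finset.sum_congr rfl
  intro γ' _
  -- inner sum over j is a count
  have inner : (∑ j : Fin p, if γ j = false ∧ mle (mplus γ j) γ' then π γ' * coefW (t+1) (msize γ') else 0)
      = ((Finset.univ.filter (fun j => γ j = false ∧ mle (mplus γ j) γ')).card : ℝ)
        * (π γ' * coefW (t+1) (msize γ')) := by
    rw [Finset.sum_ite, Finset.sum_const, Finset.sum_const_zero, add_zero, nsmul_eq_mul]
  rw [inner]
  by_cases hle : mle γ γ'
  · by_cases he : γ' = γ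
    · subst he
      have : (Finset.univ.filter (fun j => γ' j = false ∧ mle (mplus γ' j) γ')).card = 0 := by
        rw [Finset.card_eq_zero, Finset.filter_eq_empty_iff]
        rintro j _ ⟨h1, h2⟩
        have := (mle_mplus_iff.mp h2).1
        rw [h1] at this; exact absurd this (by simp)
      rw [this, if_pos (mle_refl _), if_pos rfl, coefW_self, mul_one]
      push_cast
      ring
    · have hcount : (Finset.univ.filter (fun j => γ j = false ∧ mle (mplus γ j) γ')).card
          = msize γ' - t := by
        rw [← card_diff_of_mle hle]
        congr 1
        apply Finset.filter_congr
        intro j _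
        constructor
        · rintro ⟨h1, h2⟩; exact ⟨h1, (mle_mplus_iff.mp h2).1⟩
        · rintro ⟨h1, h2⟩; exact ⟨h1, mle_mplus_iff.mpr ⟨h2, hle⟩⟩
      rw [hcount, if_pos hle, if_neg he, sub_zero]
      have hlt : t < msize γ' := mle_strict_size hle he
      have hc := coefW_succ t (msize γ') hlt
      calc ((msize γ' - t : ℕ) : ℝ) * (π γ' * coefW (t+1) (msize γ'))
          = (((msize γ' - t : ℕ) : ℝ) * coefW (t+1) (msize γ')) * π γ' := by ring
        _ = (((t+1 : ℕ) : ℝ) * coefW t (msize γ')) * π γ' := by rw [hc]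
        _ = ((t+1 : ℕ) : ℝ) * (π γ' * coefW t (msize γ')) := by ring
  · have hcount : (Finset.univ.filter (fun j => γ j = false ∧ mle (mplus γ j) γ')).card = 0 := by
      rw [Finset.card_eq_zero, Finset.filter_eq_empty_iff]
      rintro j _ ⟨h1, h2⟩
      exact hle (mle_mplus_iff.mp h2).2
    have hne : γ' ≠ γ := by
      rintro rfl; exact hle (mle_refl _)
    rw [hcount, if_neg hle, if_neg hne]
    simp

lemma Wf_zero_step (hnn : ∀ γ, 0 ≤ π γ) {γ : Model p} {j : Fin p}
    (hj : γ j = false) (h : Wf π γ = π γ) : Wf π (mplus γ j) = 0 := by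
  have hrec := Wf_rec (π := π) γ
  rw [h, sub_self, mul_zero] at hrec
  have hterm := (Finset.sum_eq_zero_iff_of_nonneg (fun i _ => by
    by_cases hi : γ i = false
    · rw [if_pos hi]; exact Wf_nonneg hnn _
    · rw [if_neg hi])).mp hrec j (Finset.mem_univ j)
  rwa [if_pos hj] at hterm

end WLem
section RhoLam
variable {p : ℕ}

/-- The stopping map. -/
def rhoD (π : Model p → ℝ) (γ : Model p) : ℝ :=
  if 0 < Wf π γ then π γ / Wf π γ else 1

/-- The selection map. -/
def lamD (π : Model p → ℝ) (γ : Model p) (j : Fin p) : ℝ :=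
  if γ j = true then 0
  else if π γ < Wf π γ then
    Wf π (mplus γ j) / (((msize γ + 1 : ℕ) : ℝ) * (Wf π γ - π γ))
  else (((p - msize γ : ℕ) : ℝ))⁻¹

variable {π : Model p → ℝ}

lemma rhoD_valid (hnn : ∀ γ, 0 ≤ π γ) (γ : Model p) : 0 ≤ rhoD π γ ∧ rhoD π γ ≤ 1 := by
  unfold rhoD
  by_cases h : 0 < Wf π γ
  · rw [if_pos h]
    constructor
    · exact div_nonneg (hnn γ) (le_of_lt h)
    · rw [div_le_one h]; exact Wf_ge_pi hnn γ
  · rw [if_neg h]; norm_num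

lemma lamD_nonneg (hnn : ∀ γ, 0 ≤ π γ) (γ : Model p) (j : Fin p) : 0 ≤ lamD π γ j := by
  unfold lamD
  by_cases h1 : γ j = true
  · simp [h1]
  · rw [if_neg h1]
    by_cases h2 : π γ < Wf π γ
    · rw [if_pos h2]
      apply div_nonneg (Wf_nonneg hnn _)
      apply mul_nonneg (by positivity)
      linarith
    · rw [if_neg h2]
      positivity

lemma lamD_vanish (γ : Model p) (j : Fin p) (h : γ j = true) : lamD π γ j = 0 := by
  simp [lamD, h]

lemma lamD_sum (hnn : ∀ γ, 0 ≤ π γ) {γ : Model p} (h : msize γ < p) :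
    (∑ j, lamD π γ j) = 1 := by
  by_cases h2 : π γ < Wf π γ
  · have hD : ((msize γ + 1 : ℕ) : ℝ) * (Wf π γ - π γ) ≠ 0 := by
      apply ne_of_gt
      apply mul_pos (by positivity)
      linarith
    have : (∑ j, lamD π γ j)
        = (∑ j : Fin p, if γ j = false then Wf π (mplus γ j) else 0)
          / (((msize γ + 1 : ℕ) : ℝ) * (Wf π γ - π γ)) := by
      rw [Finset.sum_div]
      apply Finset.sum_congr rfl
      intro j _
      unfold lamD
      cases hj : γ j
      · simp [h2]
      · simp
    rw [this, Wf_rec, div_self hD]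
  · have hcount : (Finset.univ.filter (fun j => γ j = false)).card = p - msize γ :=
      card_false γ
    have hpos : 0 < p - msize γ := by omega
    have : (∑ j, lamD π γ j) = ∑ j : Fin p, if γ j = false then (((p - msize γ : ℕ) : ℝ))⁻¹ else 0 := by
      apply Finset.sum_congr rfl
      intro j _
      unfold lamD
      cases hj : γ j
      · simp [h2]
      · simp
    rw [this, Finset.sum_ite, Finset.sum_const, Finset.sum_const_zero, add_zero,
      nsmul_eq_mul, hcount]
    rw [mul_inv_cancel₀]
    exact Nat.cast_ne_zero.mpr (by omega)

/-- If the continue-mass at `γ` vanishes then weights of all successors vanish. -/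
lemma rhoD_eq_one_of (hnn : ∀ γ, 0 ≤ π γ) {γ : Model p} (h : ¬ π γ < Wf π γ) :
    1 - rhoD π γ = 0 := by
  have hge := Wf_ge_pi hnn γ
  have heq : Wf π γ = π γ := le_antisymm (not_lt.mp h) hge
  unfold rhoD
  by_cases h1 : 0 < Wf π γ
  · rw [if_pos h1, heq, div_self (by linarith)]; ring
  · rw [if_neg h1]; ring

end RhoLam
section Chain
variable {S B : Type} [Fintype S] [Fintype B] [DecidableEq S]

/-- Fold of decisions into states. -/
def foldD (step : S → B → S) (s0 : S) {n : ℕ} (d : Fin n → B) : ℕ → S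
  | 0 => s0
  | t + 1 => if h : t < n then step (foldD step s0 d t) (d ⟨t, h⟩) else foldD step s0 d t

/-- Forward distribution of the chain. -/
def muD (step : S → B → S) (s0 : S) (w : S → B → ℝ) : ℕ → S → ℝ
  | 0 => fun s => if s = s0 then 1 else 0
  | t + 1 => fun s' => ∑ s : S, ∑ x : B,
      muD step s0 w t s * w s x * (if step s x = s' then 1 else 0)

lemma foldD_snoc (step : S → B → S) (s0 : S) {n : ℕ} (d : Fin n → B) (x : B) :
    ∀ t, t ≤ n → foldD step s0 (Fin.snoc d x : Fin (n+1) → B) t = foldD step s0 d t := by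
  intro t
  induction t with
  | zero => intro _; rfl
  | succ t ih =>
    intro ht
    have ht' : t < n := ht
    have hsnoc : (Fin.snoc d x : Fin (n+1) → B) ⟨t, Nat.lt_succ_of_lt ht'⟩ = d ⟨t, ht'⟩ := by
      have : (⟨t, Nat.lt_succ_of_lt ht'⟩ : Fin (n+1)) = Fin.castSucc ⟨t, ht'⟩ := rfl
      rw [this, Fin.snoc_castSucc]
    rw [foldD, foldD, dif_pos (Nat.lt_succ_of_lt ht'), dif_pos ht', hsnoc,
      ih (le_of_lt ht')]

lemma foldD_snoc_last (step : S → B → S) (s0 : S) {n : ℕ} (d : Fin n → B) (x : B) :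
    foldD step s0 (Fin.snoc d x : Fin (n+1) → B) (n+1) = step (foldD step s0 d n) x := by
  rw [foldD, dif_pos (Nat.lt_succ_self n)]
  have h1 : (⟨n, Nat.lt_succ_self n⟩ : Fin (n+1)) = Fin.last n := rfl
  rw [h1, Fin.snoc_last, foldD_snoc step s0 d x n le_rfl]

lemma chain_sum (step : S → B → S) (s0 : S) (w : S → B → ℝ) :
    ∀ (n : ℕ) (F : S → ℝ),
      (∑ d : Fin n → B, (∏ t : Fin n, w (foldD step s0 d (t : ℕ)) (d t)) * F (foldD step s0 d n))
        = ∑ s : S, muD step s0 w n s * F s := by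
  intro n
  induction n with
  | zero =>
    intro F
    rw [Finset.sum_eq_single (fun i => (Fin.elim0 i : B))]
    · have h1 : (∑ s : S, muD step s0 w 0 s * F s) = F s0 := by
        simp only [muD, ite_mul, one_mul, zero_mul]
        rw [Finset.sum_ite_eq' Finset.univ s0 F, if_pos (Finset.mem_univ s0)]
      rw [h1]
      simp [foldD]
    · intro d _ hd
      exact absurd (funext fun i => Fin.elim0 i) hd
    · intro h; exact absurd (Finset.mem_univ _) h
  | succ n ih =>
    intro F
    -- reindex over snoc
    have hre : (∑ d : Fin (n+1) → B,
        (∏ t : Fin (n+1), w (foldD step s0 d (t : ℕ)) (d t)) * F (foldD step s0 d (n+1)))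
        = ∑ q : B × (Fin n → B),
            (∏ t : Fin (n+1), w (foldD step s0 (Fin.snoc q.2 q.1 : Fin (n+1) → B) (t : ℕ))
              ((Fin.snoc q.2 q.1 : Fin (n+1) → B) t))
            * F (foldD step s0 (Fin.snoc q.2 q.1 : Fin (n+1) → B) (n+1)) := by
      exact (Fintype.sum_equiv (Fin.snocEquiv (fun _ => B)) _ _ (fun q => rfl)).symm
    rw [hre, Fintype.sum_prod_type, Finset.sum_comm]
    have hterm : ∀ (d : Fin n → B) (x : B),
        (∏ t : Fin (n+1), w (foldD step s0 (Fin.snoc d x : Fin (n+1) → B) (t : ℕ))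
          ((Fin.snoc d x : Fin (n+1) → B) t))
          * F (foldD step s0 (Fin.snoc d x : Fin (n+1) → B) (n+1))
        = (∏ t : Fin n, w (foldD step s0 d (t : ℕ)) (d t))
          * (w (foldD step s0 d n) x * F (step (foldD step s0 d n) x)) := by
      intro d x
      rw [Fin.prod_univ_castSucc]
      have h2 : ∀ t : Fin n,
          w (foldD step s0 (Fin.snoc d x : Fin (n+1) → B) ((Fin.castSucc t : Fin (n+1)) : ℕ))
            ((Fin.snoc d x : Fin (n+1) → B) (Fin.castSucc t))
          = w (foldD step s0 d (t : ℕ)) (d t) := by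
        intro t
        rw [Fin.snoc_castSucc, Fin.coe_castSucc, foldD_snoc step s0 d x t (le_of_lt t.isLt)]
      rw [Finset.prod_congr rfl (fun t _ => h2 t), Fin.snoc_last]
      have h3 : ((Fin.last n : Fin (n+1)) : ℕ) = n := rfl
      rw [h3, foldD_snoc step s0 d x n le_rfl, foldD_snoc_last]
      ring
    have hsum2 : ∀ d : Fin n → B, (∑ x : B,
        (∏ t : Fin (n+1), w (foldD step s0 (Fin.snoc d x : Fin (n+1) → B) (t : ℕ))
          ((Fin.snoc d x : Fin (n+1) → B) t))
          * F (foldD step s0 (Fin.snoc d x : Fin (n+1) → B) (n+1)))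
        = (∏ t : Fin n, w (foldD step s0 d (t : ℕ)) (d t))
          * (∑ x : B, w (foldD step s0 d n) x * F (step (foldD step s0 d n) x)) := by
      intro d
      rw [Finset.mul_sum]
      exact Finset.sum_congr rfl (fun x _ => hterm d x)
    rw [Finset.sum_congr rfl (fun d _ => hsum2 d)]
    rw [ih (fun s => ∑ x : B, w s x * F (step s x))]
    -- now massage RHS
    have hR : (∑ s' : S, muD step s0 w (n+1) s' * F s')
        = ∑ s : S, ∑ x : B, muD step s0 w n s * w s x * F (step s x) := by
      rw [show muD step s0 w (n+1) = fun s' => ∑ s : S, ∑ x : B,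
        muD step s0 w n s * w s x * (if step s x = s' then 1 else 0) from rfl]
      simp only [Finset.sum_mul]
      rw [Finset.sum_comm]
      apply Finset.sum_congr rfl; intro s _
      rw [Finset.sum_comm]
      apply Finset.sum_congr rfl; intro x _
      simp [ite_mul, Finset.sum_ite_eq]
    rw [hR]
    apply Finset.sum_congr rfl; intro s _
    rw [Finset.mul_sum]
    apply Finset.sum_congr rfl; intro x _
    ring

end Chain
section Connect
variable {p : ℕ}

/-- The pFS-chain step function on states (model, stopped?). -/
def stepF (p : ℕ) : (Model p × Bool) → (Bool × Fin p) → (Model p × Bool) :=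
  fun s x => (if x.1 = true then s.1 else mplus s.1 x.2, s.2 || x.1)

/-- The pFS-chain step weight. -/
def wF (π : Model p → ℝ) : (Model p × Bool) → (Bool × Fin p) → ℝ :=
  fun s x =>
    (if s.2 = true then (if x.1 = true then 1 else 0)
     else if x.1 = true then rhoD π s.1 else 1 - rhoD π s.1)
    * lamD π s.1 x.2

lemma tent_eq_foldD (d : Dec p) :
    ∀ t : ℕ, tent d t = (foldD (stepF p) (mnull p, false) d t).1 := by
  intro t
  induction t with
  | zero => rfl
  | succ t ih =>
    by_cases h : t < p
    · rw [tent, foldD, dif_pos h, dif_pos h]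
      by_cases hd : (d ⟨t, h⟩).1 = true
      · rw [if_pos hd]
        show tent d t = (stepF p _ _).1
        rw [stepF]
        simp only [hd, if_pos]
        exact ih
      · rw [if_neg hd]
        show mplus (tent d t) (d ⟨t, h⟩).2 = (stepF p _ _).1
        rw [stepF]
        simp only [hd]
        rw [ih]
        simp
    · rw [tent, foldD, dif_neg h, dif_neg h]
      exact ih

lemma stopB_eq_foldD (d : Dec p) :
    ∀ t : ℕ, stopB d t ↔ ((foldD (stepF p) (mnull p, false) d t).2 = true) := by
  intro t
  induction t with
  | zero =>
    constructor
    · rintro ⟨s, hs, _⟩; omega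
    · intro h; exact absurd h (by simp [foldD])
  | succ t ih =>
    have hsucc : stopB d (t+1) ↔ (stopB d t ∨ ∃ h : t < p, (d ⟨t, h⟩).1 = true) := by
      constructor
      · rintro ⟨s, hs, h1⟩
        rcases Nat.lt_or_ge (s : ℕ) t with h2 | h2
        · exact Or.inl ⟨s, h2, h1⟩
        · have : (s : ℕ) = t := by omega
          refine Or.inr ⟨by omega, ?_⟩
          have : s = ⟨t, by omega⟩ := Fin.ext this
          rwa [← this]
      · rintro (⟨s, hs, h1⟩ | ⟨h, h1⟩)
        · exact ⟨s, by omega, h1⟩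
        · exact ⟨⟨t, h⟩, by simp, h1⟩
    rw [hsucc, ih]
    by_cases h : t < p
    · rw [foldD, dif_pos h]
      show _ ↔ ((_ || (d ⟨t, h⟩).1) = true)
      rw [Bool.or_eq_true]
      constructor
      · rintro (h1 | ⟨_, h1⟩)
        · exact Or.inl h1
        · exact Or.inr h1
      · rintro (h1 | h1)
        · exact Or.inl h1
        · exact Or.inr ⟨h, h1⟩
    · rw [foldD, dif_neg h]
      constructor
      · rintro (h1 | ⟨h1, _⟩)
        · exact h1
        · omega
      · exact Or.inl

lemma finalProb_eq_mu (π : Model p → ℝ) (γ : Model p) :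
    finalProb (rhoD π) (lamD π) γ
      = muD (stepF p) ((mnull p, false)) (wF π) p (γ, true)
        + muD (stepF p) ((mnull p, false)) (wF π) p (γ, false) := by
  have hstep : ∀ (d : Dec p) (t : Fin p),
      stepProb (rhoD π) (lamD π) d t
        = wF π (foldD (stepF p) (mnull p, false) d (t : ℕ)) (d t) := by
    intro d t
    rw [stepProb, wF, tent_eq_foldD d (t : ℕ)]
    congr 1
    rcases Bool.eq_false_or_eq_true (foldD (stepF p) (mnull p, false) d (t : ℕ)).2 with h | h
    · rw [if_pos (by rw [stopB_eq_foldD]; exact h), if_pos h]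
    · rw [if_neg (show ¬ stopB d (t : ℕ) by rw [stopB_eq_foldD]; simp [h]),
        if_neg (show ¬ (foldD (stepF p) (mnull p, false) d (t : ℕ)).2 = true by simp [h])]
  have hterm : ∀ d : Dec p,
      (if tent d p = γ then pathProb (rhoD π) (lamD π) d else 0)
        = (∏ t : Fin p, wF π (foldD (stepF p) (mnull p, false) d (t : ℕ)) (d t))
          * (if (foldD (stepF p) (mnull p, false) d p).1 = γ then (1:ℝ) else 0) := by
    intro d
    rw [pathProb, Finset.prod_congr rfl (fun t _ => hstep d t), ← tent_eq_foldD d p]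
    by_cases h : tent d p = γ
    · rw [if_pos h, if_pos h, mul_one]
    · rw [if_neg h, if_neg h, mul_zero]
  rw [finalProb, Finset.sum_congr rfl (fun d _ => hterm d)]
  rw [chain_sum (stepF p) (mnull p, false) (wF π) p
    (fun s => if s.1 = γ then (1:ℝ) else 0)]
  rw [Fintype.sum_prod_type]
  have hcollapse : ∀ b : Bool, (∑ γ' : Model p,
      muD (stepF p) ((mnull p, false)) (wF π) p (γ', b)
        * (if γ' = γ then (1:ℝ) else 0))
      = muD (stepF p) ((mnull p, false)) (wF π) p (γ, b) := by
    intro b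
    rw [Finset.sum_congr rfl (fun γ' _ => by
      rw [mul_ite, mul_one, mul_zero] :
        ∀ γ' ∈ Finset.univ, _ = if γ' = γ then muD (stepF p) ((mnull p, false)) (wF π) p (γ', b) else 0)]
    rw [Finset.sum_ite_eq' Finset.univ γ, if_pos (Finset.mem_univ γ)]
  simp only [Fintype.sum_bool]
  rw [Finset.sum_add_distrib, hcollapse true, hcollapse false]

end Connect
section Invariant
variable {p : ℕ} {π : Model p → ℝ}

lemma mu_succ_true (π : Model p → ℝ) (t : ℕ) (γ' : Model p) :
    muD (stepF p) ((mnull p, false)) (wF π) (t+1) (γ', true)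
      = (muD (stepF p) ((mnull p, false)) (wF π) t (γ', true)
          + muD (stepF p) ((mnull p, false)) (wF π) t (γ', false) * rhoD π γ')
        * ∑ j, lamD π γ' j := by
  set μ := muD (stepF p) ((mnull p, false)) (wF π) with hμ
  show (∑ s : Model p × Bool, ∑ x : Bool × Fin p,
      μ t s * wF π s x * (if stepF p s x = (γ', true) then 1 else 0)) = _
  rw [Fintype.sum_prod_type]
  have hγ0 : ∀ γ0 : Model p,
      (∑ b : Bool, ∑ x : Bool × Fin p,
        μ t (γ0, b) * wF π (γ0, b) x * (if stepF p (γ0, b) x = (γ', true) then 1 else 0))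
      = (if γ0 = γ' then 1 else 0)
        * ((μ t (γ0, true) + μ t (γ0, false) * rhoD π γ0) * ∑ j, lamD π γ0 j) := by
    intro γ0
    rw [Fintype.sum_bool, Fintype.sum_prod_type, Fintype.sum_prod_type,
      Fintype.sum_bool, Fintype.sum_bool]
    simp only [wF, stepF, Prod.mk.injEq, Bool.or_true, Bool.or_false,
      Bool.false_eq_true, Bool.true_eq_false, if_true, if_false, ite_true, ite_false,
      and_true, and_false, true_and, false_and, zero_mul, mul_zero, one_mul,
      Finset.sum_const_zero, add_zero, zero_add]
    conv_rhs => rw [Finset.mul_sum, Finset.mul_sum]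
    rw [← Finset.sum_add_distrib]
    apply Finset.sum_congr rfl
    intro j _
    by_cases h : γ0 = γ'
    · rw [if_pos h]; ring
    · rw [if_neg h]; ring
  rw [Finset.sum_congr rfl (fun γ0 _ => hγ0 γ0)]
  simp only [ite_mul, one_mul, zero_mul]
  rw [Finset.sum_ite_eq' Finset.univ γ', if_pos (Finset.mem_univ γ')]

lemma mu_succ_false (π : Model p → ℝ) (t : ℕ) (γ' : Model p) :
    muD (stepF p) ((mnull p, false)) (wF π) (t+1) (γ', false)
      = ∑ γ0 : Model p, ∑ j : Fin p,
          muD (stepF p) ((mnull p, false)) (wF π) t (γ0, false)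
            * ((1 - rhoD π γ0) * lamD π γ0 j)
            * (if mplus γ0 j = γ' then 1 else 0) := by
  set μ := muD (stepF p) ((mnull p, false)) (wF π) with hμ
  show (∑ s : Model p × Bool, ∑ x : Bool × Fin p,
      μ t s * wF π s x * (if stepF p s x = (γ', false) then 1 else 0)) = _
  rw [Fintype.sum_prod_type]
  apply Finset.sum_congr rfl
  intro γ0 _
  rw [Fintype.sum_bool, Fintype.sum_prod_type, Fintype.sum_prod_type,
    Fintype.sum_bool, Fintype.sum_bool]
  simp only [wF, stepF, Prod.mk.injEq, Bool.or_true, Bool.or_false,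
    Bool.false_eq_true, Bool.true_eq_false, if_true, if_false, ite_true, ite_false,
    and_true, and_false, true_and, false_and, zero_mul, mul_zero, one_mul,
    Finset.sum_const_zero, add_zero, zero_add]

lemma mu_invariant (hnn : ∀ γ, 0 ≤ π γ) (hsum : ∑ γ : Model p, π γ = 1) :
    ∀ t, t ≤ p → ∀ γ : Model p,
      muD (stepF p) ((mnull p, false)) (wF π) t (γ, true)
          = (if msize γ < t then π γ else 0)
        ∧ muD (stepF p) ((mnull p, false)) (wF π) t (γ, false)
          = (if msize γ = t then Wf π γ else 0) := by
  set μ := muD (stepF p) ((mnull p, false)) (wF π) with hμ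
  intro t
  induction t with
  | zero =>
    intro _ γ
    constructor
    · show (if ((γ, true) : Model p × Bool) = (mnull p, false) then (1:ℝ) else 0) = _
      rw [if_neg (by simp), if_neg (by omega)]
    · show (if ((γ, false) : Model p × Bool) = (mnull p, false) then (1:ℝ) else 0) = _
      by_cases h : γ = mnull p
      · rw [if_pos (by rw [h]), if_pos (by rw [h]; exact msize_eq_zero.mpr rfl),
          h, Wf_null hsum]
      · rw [if_neg (by simp [h]), if_neg (fun hc => h (msize_eq_zero.mp hc))]
    | succ t ih =>
    intro ht γ'
    have ht' : t ≤ p := by omega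
    have htp : t < p := by omega
    constructor
    · -- true component
      rw [hμ] at *
      rw [mu_succ_true]
      rcases Nat.lt_trichotomy (msize γ') t with hk | hk | hk
      · rw [(ih ht' γ').1, (ih ht' γ').2, if_pos hk, if_neg (by omega),
          lamD_sum hnn (by omega), if_pos (by omega)]
        ring
      · rw [(ih ht' γ').1, (ih ht' γ').2, if_neg (by omega), if_pos hk,
          lamD_sum hnn (by omega), if_pos (by omega)]
        by_cases hW : 0 < Wf π γ'
        · rw [rhoD, if_pos hW]
          field_simp
          ring
        · have hW0 : Wf π γ' = 0 :=
            le_antisymm (not_lt.mp hW) (Wf_nonneg hnn γ')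
          have hπ0 : π γ' = 0 :=
            le_antisymm (hW0 ▸ Wf_ge_pi hnn γ') (hnn γ')
          rw [hW0, hπ0]
          ring
      · rw [(ih ht' γ').1, (ih ht' γ').2, if_neg (by omega), if_neg (by omega),
          if_neg (by omega)]
        ring
    · -- false component
      rw [hμ] at *
      rw [mu_succ_false]
      by_cases hk : msize γ' = t + 1
      · rw [if_pos hk, Finset.sum_comm]
        have hj : ∀ j : Fin p,
            (∑ γ0 : Model p, muD (stepF p) ((mnull p, false)) (wF π) t (γ0, false)
              * ((1 - rhoD π γ0) * lamD π γ0 j)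
              * (if mplus γ0 j = γ' then 1 else 0))
            = if γ' j = true then Wf π γ' / ((t + 1 : ℕ) : ℝ) else 0 := by
          intro j
          by_cases hgj : γ' j = true
          · rw [if_pos hgj]
            set γ0 : Model p := Function.update γ' j false with hγ0def
            have hγ0j : γ0 j = false := by simp [hγ0def]
            have hmp : mplus γ0 j = γ' := by
              funext i
              by_cases hij : i = j
              · subst hij; rw [mplus_apply_self, hgj]
              · rw [mplus_apply_ne _ hij, hγ0def, Function.update_of_ne hij]
            have hms : msize γ' = msize γ0 + 1 := by rw [← hmp, msize_mplus hγ0j]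
            have hms0 : msize γ0 = t := by omega
            rw [Finset.sum_eq_single γ0]
            · rw [if_pos hmp, mul_one, (ih ht' γ0).2, if_pos hms0]
              by_cases hcont : π γ0 < Wf π γ0
              · have hWpos : 0 < Wf π γ0 := lt_of_le_of_lt (hnn γ0) hcont
                rw [rhoD, if_pos hWpos, lamD, if_neg (by simp [hγ0j]), if_pos hcont,
                  hmp, hms0]
                have hne1 : Wf π γ0 ≠ 0 := ne_of_gt hWpos
                have hne2 : Wf π γ0 - π γ0 ≠ 0 := by linarith
                have hne3 : ((t + 1 : ℕ) : ℝ) ≠ 0 := by positivity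
                field_simp
              · have h1ρ : 1 - rhoD π γ0 = 0 := rhoD_eq_one_of hnn hcont
                have heq : Wf π γ0 = π γ0 :=
                  le_antisymm (not_lt.mp hcont) (Wf_ge_pi hnn γ0)
                have hWz : Wf π γ' = 0 := by
                  rw [← hmp]; exact Wf_zero_step hnn hγ0j heq
                rw [h1ρ, hWz]
                simp
            · intro γ1 _ hne
              by_cases hm : mplus γ1 j = γ'
              · by_cases hj1 : γ1 j = true
                · rw [lamD_vanish _ _ hj1]; ring
                · exfalso
                  apply hne
                  funext i
                  by_cases hij : i = j
                  · subst hij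
                    have h1 : γ1 i = false := by
                      cases h : γ1 i
                      · rfl
                      · exact absurd h hj1
                    rw [h1, hγ0def, Function.update_self]
                  · rw [hγ0def, Function.update_of_ne hij, ← hm, mplus_apply_ne _ hij]
              · rw [if_neg hm, mul_zero]
            · intro h; exact absurd (Finset.mem_univ _) h
          · rw [if_neg hgj]
            apply Finset.sum_eq_zero
            intro γ0 _
            have hm : ¬ (mplus γ0 j = γ') := by
              intro hm
              rw [← hm, mplus_apply_self] at hgj
              exact hgj rfl
            rw [if_neg hm, mul_zero]
        rw [Finset.sum_congr rfl (fun j _ => hj j)]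
        rw [Finset.sum_ite, Finset.sum_const, Finset.sum_const_zero, add_zero,
          nsmul_eq_mul]
        have hcard : (Finset.univ.filter (fun j => γ' j = true)).card = t + 1 := hk ▸ rfl
        rw [hcard]
        rw [mul_div_cancel₀]
        positivity
      · rw [if_neg hk]
        apply Finset.sum_eq_zero
        intro γ0 _
        apply Finset.sum_eq_zero
        intro j _
        by_cases hm : mplus γ0 j = γ'
        · by_cases hj0 : γ0 j = true
          · rw [lamD_vanish _ _ hj0]; ring
          · have hfalse : γ0 j = false := by
              cases h : γ0 j
              · rfl
              · exact absurd h hj0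
            have : msize γ' = msize γ0 + 1 := by rw [← hm, msize_mplus hfalse]
            have hms0 : msize γ0 ≠ t := by omega
            rw [(ih ht' γ0).2, if_neg hms0]
            ring
        · rw [if_neg hm, mul_zero]

end Invariant
/-- **Generality of the pFS representation.** Every probability measure on the model space
`{0,1}^p` is the marginal distribution of the final model of some pFS procedure. -/
theorem pFS_generality {p : ℕ} (π : Model p → ℝ) (hnn : ∀ γ, 0 ≤ π γ)
    (hsum : ∑ γ : Model p, π γ = 1) :
    ∃ (ρ : Model p → ℝ) (lam : Model p → Fin p → ℝ),
      IsPFS ρ lam ∧ ∀ γ : Model p, finalProb ρ lam γ = π γ := by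
  refine ⟨rhoD π, lamD π, ⟨fun γ _ => rhoD_valid hnn γ,
    fun γ h => ⟨lamD_nonneg hnn γ, lamD_sum hnn h, fun j hj => lamD_vanish γ j hj⟩⟩, ?_⟩
  intro γ
  rw [finalProb_eq_mu π γ]
  obtain ⟨h1, h2⟩ := mu_invariant hnn hsum p le_rfl γ
  rw [h1, h2]
  rcases lt_or_eq_of_le (msize_le γ) with h | h
  · rw [if_pos h, if_neg (by omega), add_zero]
  · rw [if_neg (by omega), if_pos h, zero_add, Wf_full h]
end
end

section
/- If a model space prior π has a pFS representation with maps ρ and λ, and L(γ) > 0 denotes the likelihood of model γ (so the posterior is π(γ|D) ∝ π(γ)L(γ)), then the posterior π(·|D) has a pFS representation with maps ρ(γ|D) = ρ(γ)·BF₀(γ)/φ(γ) and λ_j(γ|D) = λ_j(γ)·(1-ρ(γ))·φ(γ^{+j}) / (φ(γ) - ρ(γ)·BF₀(γ)) whenever ρ(γ) < 1 (and ρ(γ|D)=1, λ_j(γ|D)=λ_j(γ) when ρ(γ)=1), where BF₀(γ) = L(γ)/L(0) and φ is defined recursively by φ(γ) = BF₀(γ) for |γ| = p and φ(γ) = ρ(γ)BF₀(γ)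 + (1-ρ(γ))·Σ_{j: γ_j=0} λ_j(γ)φ(γ^{+j}) for |γ| < p. -/
open Finset

attribute [local instance] Classical.propDecidable

noncomputable section

/-- Bayes factor of `γ` against the null model: `BF₀(γ) = L(γ)/L(0)`. -/
def bf0 {p : ℕ} (L : Model p → ℝ) (γ : Model p) : ℝ := L γ / L (mnull p)

/-- The posterior stopping map: `ρ(γ|D) = ρ(γ)·BF₀(γ)/φ(γ)` when `ρ(γ) < 1`, and `1` when
`ρ(γ) = 1`. -/
def rhoPost {p : ℕ} (ρ BF φf : Model p → ℝ) : Model p → ℝ :=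
  fun γ => if ρ γ = 1 then 1 else ρ γ * BF γ / φf γ

/-- The posterior selection map:
`λ_j(γ|D) = λ_j(γ)·(1-ρ(γ))·φ(γ^{+j})/(φ(γ) - ρ(γ)·BF₀(γ))` when `ρ(γ) < 1`, and `λ_j(γ)`
when `ρ(γ) = 1`. -/
def lamPost {p : ℕ} (ρ : Model p → ℝ) (lam : Model p → Fin p → ℝ) (BF φf : Model p → ℝ) :
    Model p → Fin p → ℝ :=
  fun γ j => if ρ γ = 1 then lam γ j
    else lam γ j * ((1 - ρ γ) * φf (mplus γ j)) / (φf γ - ρ γ * BF γ)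

namespace PFSAux

variable {p : ℕ}

lemma msize_le (γ : Model p) : msize γ ≤ p := by
  classical
  have := Finset.card_filter_le (Finset.univ : Finset (Fin p)) (fun j => γ j = true)
  simpa [msize] using this

lemma mplus_self {γ : Model p} {j : Fin p} (h : γ j = true) : mplus γ j = γ := by
  have : mplus γ j = Function.update γ j (γ j) := by rw [h]; rfl
  rw [this, Function.update_eq_self]

lemma mplus_apply (γ : Model p) (j i : Fin p) :
    mplus γ j i = if i = j then true else γ i := by
  simp [mplus, Function.update_apply]

lemma msize_mplus {γ : Model p} {j : Fin p} (h : γ j = false) :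
    msize (mplus γ j) = msize γ + 1 := by
  classical
  have hset : (Finset.univ.filter (fun i => mplus γ j i = true))
      = insert j (Finset.univ.filter (fun i => γ i = true)) := by
    ext i
    by_cases hij : i = j <;> simp [mplus_apply, hij, h]
  have hj : j ∉ Finset.univ.filter (fun i => γ i = true) := by simp [h]
  rw [msize, hset, Finset.card_insert_of_notMem hj, msize]

lemma msize_mplus_le (γ : Model p) (j : Fin p) : msize (mplus γ j) ≤ msize γ + 1 := by
  cases hj : γ j
  · rw [msize_mplus hj]
  · rw [mplus_self hj]; omega

lemma tent_zero (d : Dec p) : tent d 0 = mnull p := rfl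

lemma msize_tent_le (d : Dec p) (t : ℕ) : msize (tent d t) ≤ t := by
  induction t with
  | zero =>
    simp [tent, mnull, msize]
  | succ t ih =>
    rw [tent]
    split
    · split
      · omega
      · exact le_trans (msize_mplus_le _ _) (by omega)
    · omega

lemma tent_congr {d d' : Dec p} {t : ℕ} (h : ∀ s : Fin p, (s : ℕ) < t → d s = d' s) :
    tent d t = tent d' t := by
  induction t with
  | zero => rfl
  | succ t ih =>
    have ih' : tent d t = tent d' t := ih (fun s hs => h s (by omega))
    rw [tent, tent]
    split
    · rename_i hlt
      rw [h ⟨t, hlt⟩ (by simp), ih']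
    · exact ih'

lemma stopB_congr {d d' : Dec p} {t : ℕ} (h : ∀ s : Fin p, (s : ℕ) < t → d s = d' s) :
    stopB d t ↔ stopB d' t := by
  unfold stopB
  constructor
  · rintro ⟨s, hs, hd⟩; exact ⟨s, hs, by rw [← h s hs]; exact hd⟩
  · rintro ⟨s, hs, hd⟩; exact ⟨s, hs, by rw [h s hs]; exact hd⟩

lemma stepProb_congr (ρ : Model p → ℝ) (lam : Model p → Fin p → ℝ)
    {d d' : Dec p} {t : Fin p} (h : ∀ s : Fin p, (s : ℕ) ≤ (t : ℕ) → d s = d' s) :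
    stepProb ρ lam d t = stepProb ρ lam d' t := by
  have h1 : tent d t = tent d' t := tent_congr (fun s hs => h s (by omega))
  have h2 : stopB d t ↔ stopB d' t := stopB_congr (fun s hs => h s (by omega))
  have h3 : d t = d' t := h t le_rfl
  unfold stepProb
  rw [h1, h3, if_congr h2 rfl rfl]

end PFSAux
namespace PFSAux

variable {p : ℕ}

/-- Backward value: probability that the final model is `γ'` given the current state `γ`
with `n` steps remaining and not yet stopped. -/
def val (ρ : Model p → ℝ) (lam : Model p → Fin p → ℝ) : ℕ → Model p → Model p → ℝ
  | 0, γ, γ' => if γ = γ' then 1 else 0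
  | n + 1, γ, γ' =>
      ρ γ * (if γ = γ' then 1 else 0)
        + (1 - ρ γ) * ∑ j, lam γ j * val ρ lam n (mplus γ j) γ'

/-- Tail value of a path at time `n`. -/
def tail (ρ : Model p → ℝ) (lam : Model p → Fin p → ℝ) (γ' : Model p)
    (n : ℕ) (d : Dec p) : ℝ :=
  if stopB d n then (if tent d n = γ' then 1 else 0) else val ρ lam (p - n) (tent d n) γ'

lemma tail_congr {ρ : Model p → ℝ} {lam : Model p → Fin p → ℝ} {γ' : Model p} {n : ℕ}
    {d d' : Dec p} (h : ∀ s : Fin p, (s : ℕ) < n → d s = d' s) :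
    tail ρ lam γ' n d = tail ρ lam γ' n d' := by
  unfold tail
  rw [tent_congr h, if_congr (stopB_congr h) rfl rfl]

/-- The heart: summing the step at time `n` against the tail at `n+1` gives the tail at `n`. -/
lemma step_sum {ρ : Model p → ℝ} {lam : Model p → Fin p → ℝ}
    (hpfs : IsPFS ρ lam) (γ' : Model p) {n : ℕ} (hn : n < p) (d : Dec p) :
    ∑ x : Bool × Fin p,
      stepProb ρ lam (Function.update d ⟨n, hn⟩ x) ⟨n, hn⟩
        * tail ρ lam γ' (n + 1) (Function.update d ⟨n, hn⟩ x)
      = tail ρ lam γ' n d := by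
  classical
  set i : Fin p := ⟨n, hn⟩
  set γ := tent d n with hγ
  have hsize : msize γ < p := lt_of_le_of_lt (msize_tent_le d n) hn
  obtain ⟨hlam0, hlam1, hlamv⟩ := hpfs.2 γ hsize
  have hupd : ∀ x : Bool × Fin p, ∀ s : Fin p, (s : ℕ) < n →
      Function.update d i x s = d s := by
    intro x s hs
    apply Function.update_of_ne
    intro hsi; rw [hsi] at hs; simp [i] at hs
  have htent : ∀ x : Bool × Fin p, tent (Function.update d i x) n = γ :=
    fun x => tent_congr (fun s hs => hupd x s hs)
  have hstop : ∀ x : Bool × Fin p, stopB (Function.update d i x) n ↔ stopB d n :=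
    fun x => stopB_congr (fun s hs => hupd x s hs)
  have hx_at : ∀ x : Bool × Fin p, Function.update d i x i = x :=
    fun x => Function.update_self i x d
  -- tentative model at time n+1
  have htent1 : ∀ x : Bool × Fin p, tent (Function.update d i x) (n + 1)
      = if x.1 = true then γ else mplus γ x.2 := by
    intro x
    rw [tent]
    simp only [dif_pos hn]
    have : (⟨n, hn⟩ : Fin p) = i := rfl
    rw [this, hx_at, htent]
  have hstop1 : ∀ x : Bool × Fin p, stopB (Function.update d i x) (n + 1)
      ↔ (stopB d n ∨ x.1 = true) := by
    intro x
    unfold stopB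
    constructor
    · rintro ⟨s, hs, hd⟩
      by_cases hsi : s = i
      · right; rw [hsi, hx_at] at hd; exact hd
      · left
        refine ⟨s, ?_, by rwa [Function.update_of_ne hsi] at hd⟩
        have : (s : ℕ) ≠ n := by intro hc; exact hsi (Fin.ext hc)
        omega
    · rintro (⟨s, hs, hd⟩ | hd)
      · exact ⟨s, by omega, by rwa [hupd x s hs]⟩
      · exact ⟨i, by simp [i], by rwa [hx_at]⟩
  -- unfold stepProb at i
  have hstep : ∀ x : Bool × Fin p,
      stepProb ρ lam (Function.update d i x) i
        = (if stopB d n then (if x.1 = true then 1 else 0)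
            else if x.1 = true then ρ γ else 1 - ρ γ) * lam γ x.2 := by
    intro x
    unfold stepProb
    rw [hx_at]
    have hv : ((i : Fin p) : ℕ) = n := rfl
    rw [hv, htent x, if_congr (hstop x) rfl rfl]
  by_cases hb : stopB d n
  · -- already stopped
    have : ∀ x : Bool × Fin p,
        stepProb ρ lam (Function.update d i x) i
          * tail ρ lam γ' (n + 1) (Function.update d i x)
        = (if x.1 = true then 1 else 0) * lam γ x.2 * (if γ = γ' then 1 else 0) := by
      intro x
      rw [hstep x]
      unfold tail
      rw [if_pos ((hstop1 x).2 (Or.inl hb)), htent1 x, if_pos hb]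
      cases hx1 : x.1 <;> simp [hx1]
    rw [Fintype.sum_congr _ _ this, Fintype.sum_prod_type]
    simp only [Fintype.sum_prod_type]
    rw [tail, if_pos hb]
    simp [← Finset.sum_mul, hlam1, ← hγ]
  · -- not yet stopped
    have hps : p - n = (p - (n+1)) + 1 := by omega
    have : ∀ x : Bool × Fin p,
        stepProb ρ lam (Function.update d i x) i
          * tail ρ lam γ' (n + 1) (Function.update d i x)
        = if x.1 = true then ρ γ * lam γ x.2 * (if γ = γ' then 1 else 0)
          else (1 - ρ γ) * (lam γ x.2 * val ρ lam (p - (n+1)) (mplus γ x.2) γ') := by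
      intro x
      rw [hstep x]
      unfold tail
      rw [if_neg hb, htent1 x]
      cases hx1 : x.1
      · simp only [Bool.false_eq_true, if_false]
        rw [if_neg (by rw [hstop1]; simp [hb, hx1])]
        ring
      · simp only [if_true]
        rw [if_pos (by rw [hstop1]; right; exact hx1)]
    rw [Fintype.sum_congr _ _ this, Fintype.sum_prod_type, Fintype.sum_bool]
    simp only [if_true, Bool.false_eq_true, if_false]
    rw [tail, if_neg hb, hps, val, ← hγ]
    have e1 : ∑ j : Fin p, ρ γ * lam γ j * (if γ = γ' then 1 else 0)
        = ρ γ * (if γ = γ' then 1 else 0) := by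
      rw [Finset.sum_congr rfl (fun j _ => by ring :
        ∀ j ∈ Finset.univ, ρ γ * lam γ j * (if γ = γ' then 1 else 0)
          = ρ γ * (if γ = γ' then 1 else 0) * lam γ j), ← Finset.mul_sum, hlam1, mul_one]
    rw [e1, ← Finset.mul_sum]

end PFSAux
namespace PFSAux

variable {p : ℕ} {ρ : Model p → ℝ} {lam : Model p → Fin p → ℝ}

/-- Partial-path sum at time `n`. -/
def Fsum (ρ : Model p → ℝ) (lam : Model p → Fin p → ℝ) (γ' : Model p) (n : ℕ) : ℝ :=
  ∑ d : Dec p, (∏ t ∈ Finset.univ.filter (fun t : Fin p => (t : ℕ) < n), stepProb ρ lam d t)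
    * tail ρ lam γ' n d

lemma Fsum_step (hpfs : IsPFS ρ lam) (γ' : Model p) {n : ℕ} (hn : n < p) :
    Fsum ρ lam γ' n = ((2 * p : ℕ) : ℝ) * Fsum ρ lam γ' (n + 1) := by
  classical
  set i : Fin p := ⟨n, hn⟩ with hi
  set e := Equiv.piSplitAt i (fun _ : Fin p => Bool × Fin p) with he
  have hre : ∀ (g : Dec p → ℝ), ∑ d : Dec p, g d
      = ∑ r : {j : Fin p // j ≠ i} → Bool × Fin p, ∑ x : Bool × Fin p, g (e.symm (x, r)) := by
    intro g
    rw [← Equiv.sum_comp e.symm g, Fintype.sum_prod_type]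
    exact Finset.sum_comm
  unfold Fsum
  rw [hre, hre, Finset.mul_sum]
  refine Finset.sum_congr rfl (fun r _ => ?_)
  set dbase : Dec p := e.symm ((true, i), r) with hdb
  have hupd : ∀ x : Bool × Fin p, e.symm (x, r) = Function.update dbase i x := by
    intro x; funext j
    by_cases hj : j = i
    · subst hj; simp [hdb, he, Equiv.piSplitAt_symm_apply]
    · simp [hdb, he, Equiv.piSplitAt_symm_apply, hj, Function.update_of_ne hj]
  have hagree : ∀ x : Bool × Fin p, ∀ s : Fin p, (s : ℕ) < n →
      Function.update dbase i x s = dbase s := by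
    intro x s hs
    apply Function.update_of_ne
    intro hsi; rw [hsi] at hs; simp [hi] at hs
  have hprod : ∀ x : Bool × Fin p,
      ∏ t ∈ Finset.univ.filter (fun t : Fin p => (t : ℕ) < n),
        stepProb ρ lam (Function.update dbase i x) t
      = ∏ t ∈ Finset.univ.filter (fun t : Fin p => (t : ℕ) < n), stepProb ρ lam dbase t := by
    intro x
    refine Finset.prod_congr rfl (fun t ht => ?_)
    simp only [Finset.mem_filter] at ht
    exact stepProb_congr ρ lam (fun s hs => hagree x s (by omega))
  have hfilter : Finset.univ.filter (fun t : Fin p => (t : ℕ) < n + 1)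
      = insert i (Finset.univ.filter (fun t : Fin p => (t : ℕ) < n)) := by
    ext t
    simp only [Finset.mem_insert, Finset.mem_filter, Finset.mem_univ, true_and]
    constructor
    · intro h
      rcases Nat.lt_succ_iff_lt_or_eq.mp h with h | h
      · right; exact h
      · left; apply Fin.ext; rw [h]
    · rintro (h | h)
      · rw [h]; simp [hi]
      · omega
  have hinotmem : i ∉ Finset.univ.filter (fun t : Fin p => (t : ℕ) < n) := by simp [hi]
  calc ∑ x : Bool × Fin p,
        (∏ t ∈ Finset.univ.filter (fun t : Fin p => (t : ℕ) < n),
          stepProb ρ lam (e.symm (x, r)) t) * tail ρ lam γ' n (e.symm (x, r))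
      = ∑ _x : Bool × Fin p,
        (∏ t ∈ Finset.univ.filter (fun t : Fin p => (t : ℕ) < n), stepProb ρ lam dbase t)
          * tail ρ lam γ' n dbase := by
        refine Finset.sum_congr rfl (fun x _ => ?_)
        rw [hupd x, hprod x, tail_congr (hagree x)]
    _ = ((2 * p : ℕ) : ℝ) *
        ((∏ t ∈ Finset.univ.filter (fun t : Fin p => (t : ℕ) < n), stepProb ρ lam dbase t)
          * tail ρ lam γ' n dbase) := by
        rw [Finset.sum_const, Finset.card_univ, Fintype.card_prod, Fintype.card_bool,
          Fintype.card_fin, nsmul_eq_mul]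
    _ = ((2 * p : ℕ) : ℝ) * ∑ x : Bool × Fin p,
        (∏ t ∈ Finset.univ.filter (fun t : Fin p => (t : ℕ) < n + 1),
          stepProb ρ lam (e.symm (x, r)) t) * tail ρ lam γ' (n + 1) (e.symm (x, r)) := by
        congr 1
        rw [← step_sum hpfs γ' hn dbase, Finset.mul_sum]
        refine Finset.sum_congr rfl (fun x _ => ?_)
        rw [hupd x, hfilter, Finset.prod_insert hinotmem, hprod x]
        ring

lemma Fsum_zero (γ' : Model p) :
    Fsum ρ lam γ' 0 = ((2 * p : ℕ) : ℝ) ^ p * val ρ lam p (mnull p) γ' := by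
  classical
  have hstop : ∀ d : Dec p, ¬ stopB d 0 := by
    rintro d ⟨s, hs, _⟩; omega
  have : ∀ d : Dec p,
      (∏ t ∈ Finset.univ.filter (fun t : Fin p => (t : ℕ) < 0), stepProb ρ lam d t)
        * tail ρ lam γ' 0 d = val ρ lam p (mnull p) γ' := by
    intro d
    have hf : Finset.univ.filter (fun t : Fin p => (t : ℕ) < 0) = ∅ := by
      ext t; simp
    rw [hf, Finset.prod_empty, one_mul, tail, if_neg (hstop d)]
    simp [tent]
  rw [Fsum, Fintype.sum_congr _ _ this, Finset.sum_const, Finset.card_univ,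
    Fintype.card_fun, Fintype.card_prod, Fintype.card_bool, Fintype.card_fin, nsmul_eq_mul]
  norm_cast

lemma Fsum_p (γ' : Model p) : Fsum ρ lam γ' p = finalProb ρ lam γ' := by
  classical
  have : ∀ d : Dec p,
      (∏ t ∈ Finset.univ.filter (fun t : Fin p => (t : ℕ) < p), stepProb ρ lam d t)
        * tail ρ lam γ' p d
      = if tent d p = γ' then pathProb ρ lam d else 0 := by
    intro d
    have hf : Finset.univ.filter (fun t : Fin p => (t : ℕ) < p) = Finset.univ := by
      ext t; simp [t.isLt]
    have htail : tail ρ lam γ' p d = if tent d p = γ' then 1 else 0 := by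
      rw [tail]
      split
      · rfl
      · simp [Nat.sub_self, val]
    rw [hf, htail, pathProb]
    split <;> simp
  rw [Fsum, Fintype.sum_congr _ _ this, finalProb]

lemma finalProb_eq_val (hpfs : IsPFS ρ lam) (γ' : Model p) :
    finalProb ρ lam γ' = val ρ lam p (mnull p) γ' := by
  classical
  rcases Nat.eq_zero_or_pos p with hp | hp
  · subst hp
    have hEmpty : IsEmpty (Bool × Fin 0) := by infer_instance
    haveI : Unique (Dec 0) := Pi.uniqueOfIsEmpty _
    rw [finalProb, Fintype.sum_unique]
    have : tent (default : Dec 0) 0 = mnull 0 := rfl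
    rw [pathProb]
    simp [val, tent, eq_comm]
  · have key : ∀ n, n ≤ p → Fsum ρ lam γ' 0 = ((2 * p : ℕ) : ℝ) ^ n * Fsum ρ lam γ' n := by
      intro n
      induction n with
      | zero => intro _; simp
      | succ n ih =>
        intro hn
        rw [ih (by omega), Fsum_step hpfs γ' (by omega), pow_succ]
        ring
    have h1 := key p le_rfl
    rw [Fsum_p, Fsum_zero] at h1
    have hK : (((2 * p : ℕ) : ℝ) ^ p) ≠ 0 := by
      apply pow_ne_zero
      simp; omega
    field_simp at h1
    linarith [h1]

end PFSAux
namespace PFSAux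

variable {p : ℕ} {ρ : Model p → ℝ} {lam : Model p → Fin p → ℝ} {L φf : Model p → ℝ}

section Post

variable (hpfs : IsPFS ρ lam) (hL : ∀ γ, 0 < L γ)
  (hφfull : ∀ γ : Model p, msize γ = p → φf γ = bf0 L γ)
  (hφrec : ∀ γ : Model p, msize γ < p →
      φf γ = ρ γ * bf0 L γ + (1 - ρ γ) *
        ∑ j ∈ Finset.univ.filter (fun j => γ j = false), lam γ j * φf (mplus γ j))

include hL in
lemma bf0_pos (γ : Model p) : 0 < bf0 L γ := div_pos (hL γ) (hL (mnull p))

include hpfs in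
lemma sum_pos_aux {γ : Model p} (hγ : msize γ < p)
    (hrec : ∀ j : Fin p, γ j = false → 0 < φf (mplus γ j)) :
    0 < ∑ j ∈ Finset.univ.filter (fun j => γ j = false), lam γ j * φf (mplus γ j) := by
  classical
  obtain ⟨hlam0, hlam1, hlamv⟩ := hpfs.2 γ hγ
  have hsum1 : ∑ j ∈ Finset.univ.filter (fun j => γ j = false), lam γ j = 1 := by
    rw [← hlam1]
    symm
    rw [← Finset.sum_filter_of_ne (p := fun j => γ j = false) (f := fun j => lam γ j)]
    intro j _ hne
    cases h : γ j
    · rfl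
    · exact absurd (hlamv j h) hne
  have : ∃ j ∈ Finset.univ.filter (fun j => γ j = false), lam γ j ≠ 0 := by
    apply Finset.exists_ne_zero_of_sum_ne_zero
    rw [hsum1]; norm_num
  obtain ⟨j, hjmem, hjne⟩ := this
  have hjf : γ j = false := by simpa using hjmem
  have hjpos : 0 < lam γ j := lt_of_le_of_ne (hlam0 j) (Ne.symm hjne)
  refine lt_of_lt_of_le (mul_pos hjpos (hrec j hjf)) ?_
  apply Finset.single_le_sum (f := fun j => lam γ j * φf (mplus γ j)) _ hjmem
  intro k hk
  have hkf : γ k = false := by simpa using hk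
  exact mul_nonneg (hlam0 k) (le_of_lt (hrec k hkf))

include hpfs hL hφfull hφrec in
lemma φ_pos : ∀ γ : Model p, 0 < φf γ := by
  classical
  suffices h : ∀ k : ℕ, ∀ γ : Model p, p - msize γ ≤ k → 0 < φf γ by
    intro γ; exact h p γ (by omega)
  intro k
  induction k with
  | zero =>
    intro γ hγ
    have : msize γ = p := le_antisymm (msize_le γ) (by omega)
    rw [hφfull γ this]
    exact bf0_pos hL γ
  | succ k ih =>
    intro γ hγ
    rcases eq_or_lt_of_le (msize_le γ) with heq | hlt
    · rw [hφfull γ heq]; exact bf0_pos hL γ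
    · have hrec : ∀ j : Fin p, γ j = false → 0 < φf (mplus γ j) := by
        intro j hj
        exact ih (mplus γ j) (by rw [msize_mplus hj]; omega)
      have hS := sum_pos_aux hpfs hlt hrec
      have hBF := bf0_pos hL γ
      obtain ⟨hρ0, hρ1⟩ := hpfs.1 γ hlt
      rw [hφrec γ hlt]
      nlinarith [mul_nonneg hρ0 hBF.le, mul_nonneg (sub_nonneg.2 hρ1) hS.le,
        mul_pos hBF hS]

include hpfs hL hφfull hφrec in
lemma denom_pos {γ : Model p} (hγ : msize γ < p) (hρ : ρ γ ≠ 1) :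
    0 < φf γ - ρ γ * bf0 L γ := by
  have hS := sum_pos_aux hpfs hγ
    (fun j hj => φ_pos hpfs hL hφfull hφrec (mplus γ j))
  obtain ⟨hρ0, hρ1⟩ := hpfs.1 γ hγ
  have hρlt : ρ γ < 1 := lt_of_le_of_ne hρ1 hρ
  rw [hφrec γ hγ]
  nlinarith

include hpfs hL hφfull hφrec in
lemma rhoPost_eq {γ : Model p} (hγ : msize γ < p) :
    rhoPost ρ (bf0 L) φf γ = ρ γ * bf0 L γ / φf γ := by
  rw [rhoPost]
  split
  · rename_i h
    have hS := sum_pos_aux hpfs hγ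
      (fun j hj => φ_pos hpfs hL hφfull hφrec (mplus γ j))
    have hφ : φf γ = bf0 L γ := by
      rw [hφrec γ hγ, h]; ring
    rw [h, hφ, one_mul, div_self (ne_of_gt (bf0_pos hL γ))]
  · rfl

include hpfs hL hφfull hφrec in
lemma rhoPost_mul {γ : Model p} (hγ : msize γ < p) :
    rhoPost ρ (bf0 L) φf γ * φf γ = ρ γ * bf0 L γ := by
  rw [rhoPost_eq hpfs hL hφfull hφrec hγ,
    div_mul_cancel₀ _ (ne_of_gt (φ_pos hpfs hL hφfull hφrec γ))]

include hpfs hL hφfull hφrec in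
lemma lamPost_mul {γ : Model p} (hγ : msize γ < p) (j : Fin p) :
    (1 - rhoPost ρ (bf0 L) φf γ) * lamPost ρ lam (bf0 L) φf γ j * φf γ
      = (1 - ρ γ) * lam γ j * φf (mplus γ j) := by
  by_cases h : ρ γ = 1
  · rw [rhoPost, lamPost, if_pos h, if_pos h, h]
    ring
  · have hd := denom_pos hpfs hL hφfull hφrec hγ h
    have hφ := φ_pos hpfs hL hφfull hφrec γ
    rw [rhoPost_eq hpfs hL hφfull hφrec hγ, lamPost, if_neg h]
    field_simp

include hpfs hL hφfull hφrec in
lemma post_validStop : ValidStop (rhoPost ρ (bf0 L) φf) := by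
  intro γ hγ
  rw [rhoPost_eq hpfs hL hφfull hφrec hγ]
  have hφ := φ_pos hpfs hL hφfull hφrec γ
  have hBF := bf0_pos hL γ
  obtain ⟨hρ0, hρ1⟩ := hpfs.1 γ hγ
  constructor
  · positivity
  · rw [div_le_one hφ]
    by_cases h : ρ γ = 1
    · have hS := sum_pos_aux hpfs hγ
        (fun j hj => φ_pos hpfs hL hφfull hφrec (mplus γ j))
      rw [hφrec γ hγ, h]; nlinarith
    · have := denom_pos hpfs hL hφfull hφrec hγ h
      linarith

include hpfs hL hφfull hφrec in
lemma post_validSel : ValidSel (lamPost ρ lam (bf0 L) φf) := by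
  intro γ hγ
  obtain ⟨hlam0, hlam1, hlamv⟩ := hpfs.2 γ hγ
  obtain ⟨hρ0, hρ1⟩ := hpfs.1 γ hγ
  by_cases h : ρ γ = 1
  · refine ⟨fun j => by rw [lamPost, if_pos h]; exact hlam0 j, ?_, fun j hj => by
      rw [lamPost, if_pos h]; exact hlamv j hj⟩
    simp only [lamPost, if_pos h]
    exact hlam1
  · have hd := denom_pos hpfs hL hφfull hφrec hγ h
    have hρlt : ρ γ < 1 := lt_of_le_of_ne hρ1 h
    refine ⟨fun j => ?_, ?_, fun j hj => by rw [lamPost, if_neg h, hlamv j hj]; ring⟩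
    · rw [lamPost, if_neg h]
      have h1 := φ_pos hpfs hL hφfull hφrec (mplus γ j)
      apply div_nonneg _ hd.le
      exact mul_nonneg (hlam0 j) (mul_nonneg (by linarith) h1.le)
    · simp only [lamPost, if_neg h]
      rw [← Finset.sum_div]
      rw [div_eq_one_iff_eq (ne_of_gt hd)]
      have hsub : φf γ - ρ γ * bf0 L γ = (1 - ρ γ) *
          ∑ j ∈ Finset.univ.filter (fun j => γ j = false), lam γ j * φf (mplus γ j) := by
        rw [hφrec γ hγ]; ring
      rw [hsub]
      rw [← Finset.sum_filter_of_ne (p := fun j => γ j = false)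
        (f := fun j => lam γ j * ((1 - ρ γ) * φf (mplus γ j)))]
      · rw [Finset.mul_sum]
        exact Finset.sum_congr rfl (fun j _ => by ring)
      · intro j _ hne
        cases hc : γ j
        · rfl
        · exact absurd (by rw [hlamv j hc]; ring) hne

end Post

end PFSAux
namespace PFSAux

variable {p : ℕ} {ρ : Model p → ℝ} {lam : Model p → Fin p → ℝ} {L φf : Model p → ℝ}

section Post2

variable (hpfs : IsPFS ρ lam) (hL : ∀ γ, 0 < L γ)
  (hφfull : ∀ γ : Model p, msize γ = p → φf γ = bf0 L γ)
  (hφrec : ∀ γ : Model p, msize γ < p →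
      φf γ = ρ γ * bf0 L γ + (1 - ρ γ) *
        ∑ j ∈ Finset.univ.filter (fun j => γ j = false), lam γ j * φf (mplus γ j))

include hpfs hL hφfull hφrec in
lemma val_post : ∀ n : ℕ, ∀ γ γ' : Model p, msize γ + n = p →
    φf γ * val (rhoPost ρ (bf0 L) φf) (lamPost ρ lam (bf0 L) φf) n γ γ'
      = bf0 L γ' * val ρ lam n γ γ' := by
  set R := rhoPost ρ (bf0 L) φf with hR
  set Λ := lamPost ρ lam (bf0 L) φf with hΛ
  intro n
  induction n with
  | zero =>
    intro γ γ' hγ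
    rw [val, val]
    split
    · rename_i h
      rw [mul_one, mul_one, hφfull γ (by omega), h]
    · rw [mul_zero, mul_zero]
  | succ n ih =>
    intro γ γ' hγ
    have hlt : msize γ < p := by omega
    obtain ⟨hlam0, hlam1, hlamv⟩ := hpfs.2 γ hlt
    have hterm : ∀ j : Fin p,
        ((1 - R γ) * Λ γ j * φf γ) * val R Λ n (mplus γ j) γ'
        = bf0 L γ' * ((1 - ρ γ) * (lam γ j * val ρ lam n (mplus γ j) γ')) := by
      intro j
      rw [hR, hΛ, lamPost_mul hpfs hL hφfull hφrec hlt j]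
      cases hj : γ j
      · have hms : msize (mplus γ j) + n = p := by rw [msize_mplus hj]; omega
        have hIH := ih (mplus γ j) γ' hms
        calc (1 - ρ γ) * lam γ j * φf (mplus γ j) * val R Λ n (mplus γ j) γ'
            = (1 - ρ γ) * lam γ j * (φf (mplus γ j) * val R Λ n (mplus γ j) γ') := by ring
          _ = (1 - ρ γ) * lam γ j * (bf0 L γ' * val ρ lam n (mplus γ j) γ') := by rw [hIH]
          _ = bf0 L γ' * ((1 - ρ γ) * (lam γ j * val ρ lam n (mplus γ j) γ')) := by ring
      · rw [hlamv j hj]; ring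
    calc φf γ * val R Λ (n + 1) γ γ'
        = (R γ * φf γ) * (if γ = γ' then (1:ℝ) else 0)
          + ∑ j, ((1 - R γ) * Λ γ j * φf γ) * val R Λ n (mplus γ j) γ' := by
          rw [val, mul_add]
          congr 1
          · ring
          · rw [← mul_assoc, mul_comm (φf γ) (1 - R γ), Finset.mul_sum]
            exact Finset.sum_congr rfl (fun j _ => by ring)
      _ = (ρ γ * bf0 L γ) * (if γ = γ' then (1:ℝ) else 0)
          + ∑ j, bf0 L γ' * ((1 - ρ γ) * (lam γ j * val ρ lam n (mplus γ j) γ')) := by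
          rw [hR, rhoPost_mul hpfs hL hφfull hφrec hlt]
          congr 1
          exact Finset.sum_congr rfl (fun j _ => hterm j)
      _ = bf0 L γ' * val ρ lam (n + 1) γ γ' := by
          have hind : (ρ γ * bf0 L γ) * (if γ = γ' then (1:ℝ) else 0)
              = bf0 L γ' * (ρ γ * (if γ = γ' then (1:ℝ) else 0)) := by
            by_cases h : γ = γ'
            · subst h; ring
            · simp [h]
          rw [hind, val, ← Finset.mul_sum, ← Finset.mul_sum]
          ring

include hpfs hφfull hφrec in
lemma val_bf_sum : ∀ n : ℕ, ∀ γ : Model p, msize γ + n = p →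
    ∑ γ' : Model p, val ρ lam n γ γ' * bf0 L γ' = φf γ := by
  intro n
  induction n with
  | zero =>
    intro γ hγ
    rw [hφfull γ (by omega)]
    simp [val, ite_mul]
  | succ n ih =>
    intro γ hγ
    have hlt : msize γ < p := by omega
    obtain ⟨hlam0, hlam1, hlamv⟩ := hpfs.2 γ hlt
    simp only [val, add_mul]
    rw [Finset.sum_add_distrib]
    have h1 : ∑ γ' : Model p, (ρ γ * (if γ = γ' then (1:ℝ) else 0)) * bf0 L γ'
        = ρ γ * bf0 L γ := by
      simp [ite_mul, mul_ite]
    have h2 : ∑ γ' : Model p,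
        ((1 - ρ γ) * ∑ j, lam γ j * val ρ lam n (mplus γ j) γ') * bf0 L γ'
        = (1 - ρ γ) * ∑ j ∈ Finset.univ.filter (fun j => γ j = false),
            lam γ j * φf (mplus γ j) := by
      calc ∑ γ' : Model p,
            ((1 - ρ γ) * ∑ j, lam γ j * val ρ lam n (mplus γ j) γ') * bf0 L γ'
          = ∑ γ' : Model p, ∑ j : Fin p,
              (1 - ρ γ) * (lam γ j * (val ρ lam n (mplus γ j) γ' * bf0 L γ')) := by
            refine Finset.sum_congr rfl (fun γ' _ => ?_)
            rw [Finset.mul_sum, Finset.sum_mul]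
            exact Finset.sum_congr rfl (fun j _ => by ring)
        _ = ∑ j : Fin p, (1 - ρ γ) *
              (lam γ j * ∑ γ' : Model p, val ρ lam n (mplus γ j) γ' * bf0 L γ') := by
            rw [Finset.sum_comm]
            exact Finset.sum_congr rfl (fun j _ => by
              rw [Finset.mul_sum, Finset.mul_sum])
        _ = ∑ j ∈ Finset.univ.filter (fun j => γ j = false), (1 - ρ γ) *
              (lam γ j * ∑ γ' : Model p, val ρ lam n (mplus γ j) γ' * bf0 L γ') := by
            symm
            apply Finset.sum_filter_of_ne
            intro j _ hne
            cases hc : γ j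
            · rfl
            · exact absurd (by rw [hlamv j hc]; ring) hne
        _ = (1 - ρ γ) * ∑ j ∈ Finset.univ.filter (fun j => γ j = false),
              lam γ j * φf (mplus γ j) := by
            rw [Finset.mul_sum]
            refine Finset.sum_congr rfl (fun j hj => ?_)
            have hjf : γ j = false := by simpa using hj
            rw [ih (mplus γ j) (by rw [msize_mplus hjf]; omega)]
    rw [h1, h2, hφrec γ hlt]

end Post2

end PFSAux
/-- **Information propagation.** If the prior `π` has pFS representation `(ρ, lam)` and `L > 0`
is the marginal likelihood, then the posterior `π(γ|D) ∝ π(γ)L(γ)` has the pFS representation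
`(rhoPost, lamPost)` built from the recursively defined `φ`. -/
theorem posterior_pFS {p : ℕ} (π ρ : Model p → ℝ) (lam : Model p → Fin p → ℝ)
    (L φ : Model p → ℝ)
    (hpfs : IsPFS ρ lam) (hrep : ∀ γ, finalProb ρ lam γ = π γ)
    (hL : ∀ γ, 0 < L γ)
    (hφfull : ∀ γ : Model p, msize γ = p → φ γ = bf0 L γ)
    (hφrec : ∀ γ : Model p, msize γ < p →
      φ γ = ρ γ * bf0 L γ + (1 - ρ γ) *
        ∑ j ∈ Finset.univ.filter (fun j => γ j = false), lam γ j * φ (mplus γ j)) :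
    IsPFS (rhoPost ρ (bf0 L) φ) (lamPost ρ lam (bf0 L) φ) ∧
      ∀ γ : Model p, finalProb (rhoPost ρ (bf0 L) φ) (lamPost ρ lam (bf0 L) φ) γ
        = π γ * L γ / ∑ γ' : Model p, π γ' * L γ' := by
  classical
  have hpost : IsPFS (rhoPost ρ (bf0 L) φ) (lamPost ρ lam (bf0 L) φ) :=
    ⟨PFSAux.post_validStop hpfs hL hφfull hφrec, PFSAux.post_validSel hpfs hL hφfull hφrec⟩
  refine ⟨hpost, fun γ => ?_⟩
  have h0 : msize (mnull p) + p = p := by simp [msize, mnull]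
  have hA := PFSAux.finalProb_eq_val hpost γ
  have hVP := PFSAux.val_post hpfs hL hφfull hφrec p (mnull p) γ h0
  have hSum := PFSAux.val_bf_sum hpfs hφfull hφrec p (mnull p) h0
  have hφpos := PFSAux.φ_pos hpfs hL hφfull hφrec (mnull p)
  have hL0 := hL (mnull p)
  have hvalprior : ∀ γ' : Model p, PFSAux.val ρ lam p (mnull p) γ' = π γ' := by
    intro γ'
    rw [← PFSAux.finalProb_eq_val hpfs γ', hrep]
  have hden : ∑ γ' : Model p, π γ' * L γ' = L (mnull p) * φ (mnull p) := by
    rw [← hSum, Finset.mul_sum]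
    refine Finset.sum_congr rfl (fun γ' _ => ?_)
    rw [hvalprior γ', bf0]
    field_simp
  rw [hA, hden]
  rw [eq_div_iff (ne_of_gt (mul_pos hL0 hφpos))]
  have key : φ (mnull p) * PFSAux.val (rhoPost ρ (bf0 L) φ) (lamPost ρ lam (bf0 L) φ)
      p (mnull p) γ = L γ / L (mnull p) * π γ := by
    rw [hVP, hvalprior γ, bf0]
  calc PFSAux.val (rhoPost ρ (bf0 L) φ) (lamPost ρ lam (bf0 L) φ) p (mnull p) γ
        * (L (mnull p) * φ (mnull p))
      = (φ (mnull p) * PFSAux.val (rhoPost ρ (bf0 L) φ) (lamPost ρ lam (bf0 L) φ)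
          p (mnull p) γ) * L (mnull p) := by ring
    _ = (L γ / L (mnull p) * π γ) * L (mnull p) := by rw [key]
    _ = π γ * L γ := by field_simp
end
end
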